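/- Let T₀ ∈ GL₃(ℂ). For p₁,…,p₄ ∈ ℂ³ let d_i(p₁,…,p₄), i = 1,2,3, be the determinant of the 3×3 matrix with columns p₁, p₂, p₃ in which the i-th column is replaced by p₄, and let P(p₁,…,p₄) be the 3×3 matrix product (p₁ | p₂ | p₃)·diag(d₁(p), d₂(p), d₃(p)). Then P(T₀p₁, T₀p₂, T₀p₃, T₀p₄) = det(T₀)·T₀·P(p₁,…,p₄). -/
import Mathlib


open Matrix

/-- `d_i(p₁,…,p₄)`, `i = 1,2,3`: the determinant of the 3×3 matrix with columns
`p₁, p₂, p₃` in which the `i`-th column is replaced by `p₄`. -/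
def dT (p : Fin 4 → Fin 3 → ℂ) (i : Fin 3) : ℂ :=
  (Matrix.of fun r c => if c = i then p 3 r else p c.castSucc r).det

/-- `P(p₁,…,p₄) = (p₁ | p₂ | p₃) · diag(d₁(p), d₂(p), d₃(p))`. -/
def PmatT (p : Fin 4 → Fin 3 → ℂ) : Matrix (Fin 3) (Fin 3) ℂ :=
  Matrix.of fun r c => p c.castSucc r * dT p c

lemma dT_mulVec (T₀ : Matrix (Fin 3) (Fin 3) ℂ) (p : Fin 4 → Fin 3 → ℂ) (i : Fin 3) :
    dT (fun i => T₀.mulVec (p i)) i = T₀.det * dT p i := by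
  have h : (Matrix.of fun r c => if c = i then T₀.mulVec (p 3) r
        else T₀.mulVec (p c.castSucc) r)
      = T₀ * (Matrix.of fun r c => if c = i then p 3 r else p c.castSucc r) := by
    ext r c
    simp only [Matrix.mul_apply, Matrix.of_apply, Matrix.mulVec, dotProduct]
    split <;> rfl
  unfold dT
  rw [h, Matrix.det_mul]

/-- **Equivariance of the image normalization (eq. 3.12).** For `T₀ ∈ GL₃(ℂ)`,
`P(T₀p₁, T₀p₂, T₀p₃, T₀p₄) = det(T₀)·T₀·P(p₁,…,p₄)`. -/
theorem PmatT_equivariance (T₀ : Matrix (Fin 3) (Fin 3) ℂ) (hT : IsUnit T₀)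
    (p : Fin 4 → Fin 3 → ℂ) :
    PmatT (fun i => T₀.mulVec (p i)) = T₀.det • (T₀ * PmatT p) := by
  ext r c
  simp only [PmatT, Matrix.of_apply, Matrix.smul_apply, Matrix.mul_apply, smul_eq_mul,
    dT_mulVec, Matrix.mulVec, dotProduct]
  rw [Finset.sum_mul, Finset.mul_sum]
  congr 1
  ext k
  ring
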